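/- The area of the intersection of two discs, one of radius r centered at a point P and one of radius r_TN centered at the origin, where P is at distance x_0 from the origin with |r_TN − x_0| < r < r_TN + x_0, equals r²(θ − sin(2θ)/2) + r_TN²(φ − sin(2φ)/2), where θ = arccos((r² + x_0² − r_TN²)/(2 x_0 r)) and φ = arccos((−r² + x_0² + r_TN²)/(2 x_0 r_TN)). -/

import Mathlib

open MeasureTheory Real

namespace LensArea
open Set intervalIntegral

lemma integral_seg (R h : ℝ) (hR : 0 < R) (hh1 : -R < h) (hh2 : h < R) :
    ∫ x in h..R, 2 * Real.sqrt (R^2 - x^2)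
      = R^2 * Real.arccos (h/R) - h * Real.sqrt (R^2 - h^2) := by
  have hRne := hR.ne'
  let f := fun x : ℝ => Real.sqrt (R ^ 2 - x ^ 2)
  let F := fun x : ℝ => R ^ 2 * arcsin (R⁻¹ * x) + x * Real.sqrt (R ^ 2 - x ^ 2)
  have hf : Continuous f := by continuity
  have hderiv : ∀ x ∈ Ioo h R, HasDerivAt F (2 * f x) x := by
    rintro x ⟨hx1', hx2⟩
    have hx1 : -R < x := hh1.trans hx1'
    convert
      ((hasDerivAt_const x (R ^ 2)).mul
            ((Real.hasDerivAt_arcsin _ _).comp x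
              ((hasDerivAt_const x R⁻¹).mul (hasDerivAt_id' x)))).add
        ((hasDerivAt_id' x).mul ((((hasDerivAt_id' x).pow 2).const_sub (R ^ 2)).sqrt _))
      using 1
    · rfl
    · rfl
    · rfl
    · have h₁ : R ^ 2 - x ^ 2 > 0 := sub_pos_of_lt (sq_lt_sq' hx1 hx2)
      have h : Real.sqrt (R ^ 2 - x ^ 2) ^ 3 = (R ^ 2 - x ^ 2) * Real.sqrt (R ^ 2 - x ^ 2) := by
        rw [pow_three, ← mul_assoc, Real.mul_self_sqrt (by positivity)]
      simp only [Pi.mul_apply, Pi.pow_apply, f]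
      have hs : Real.sqrt (1 - (R⁻¹ * x) ^ 2) = Real.sqrt (R ^ 2 - x ^ 2) / R := by
        rw [show 1 - (R⁻¹ * x) ^ 2 = (R ^ 2 - x ^ 2) / R ^ 2 by field_simp,
          Real.sqrt_div' _ (sq_nonneg R), Real.sqrt_sq hR.le]
      rw [hs]
      have hs2 : Real.sqrt (R ^ 2 - x ^ 2) ^ 2 = R ^ 2 - x ^ 2 := Real.sq_sqrt h₁.le
      have spos : 0 < Real.sqrt (R ^ 2 - x ^ 2) := Real.sqrt_pos.2 h₁
      field_simp
      linear_combination (2 : ℝ) * hs2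
    · suffices -(1 : ℝ) < R⁻¹ * x by exact this.ne'
      calc
        -(1 : ℝ) = R⁻¹ * -R := by simp [inv_mul_cancel₀ hRne]
        _ < R⁻¹ * x := by nlinarith [inv_pos.mpr hR]
    · suffices R⁻¹ * x < 1 by exact this.ne
      calc
        R⁻¹ * x < R⁻¹ * R := by nlinarith [inv_pos.mpr hR]
        _ = 1 := inv_mul_cancel₀ hRne
    · simp only [Pi.pow_apply]; nlinarith
  have hcont : ContinuousOn F (Icc h R) := (by continuity : Continuous F).continuousOn
  have key : ∫ x in h..R, 2 * f x = F R - F h :=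
    integral_eq_sub_of_hasDeriv_right_of_le hh2.le hcont
      (fun x hx => (hderiv x hx).hasDerivWithinAt)
      (continuous_const.mul hf).continuousOn.intervalIntegrable
  rw [key]
  have : F R = R ^ 2 * (π / 2) := by
    simp [F, inv_mul_cancel₀ hRne, Real.arcsin_one]
  rw [this]
  simp only [F, inv_mul_eq_div, Real.arccos]
  ring

lemma circle_null (R : ℝ) (hR : 0 ≤ R) :
    volume {p : ℝ × ℝ | p.1 ^ 2 + p.2 ^ 2 = R ^ 2} = 0 := by
  have hmp : MeasurePreserving
      (fun z : EuclideanSpace ℝ (Fin 2) => ((MeasurableEquiv.finTwoArrow)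
        ((MeasurableEquiv.toLp 2 (Fin 2 → ℝ)).symm z) : ℝ × ℝ)) volume volume :=
    (volume_preserving_finTwoArrow ℝ).comp
      (EuclideanSpace.volume_preserving_symm_measurableEquiv_toLp (Fin 2))
  have hpre : (fun z : EuclideanSpace ℝ (Fin 2) => ((MeasurableEquiv.finTwoArrow)
        ((MeasurableEquiv.toLp 2 (Fin 2 → ℝ)).symm z) : ℝ × ℝ)) ⁻¹'
      {p : ℝ × ℝ | p.1 ^ 2 + p.2 ^ 2 = R ^ 2} = Metric.sphere (0 : EuclideanSpace ℝ (Fin 2)) R := by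
    ext z
    simp only [Set.mem_preimage, Set.mem_setOf_eq, Metric.mem_sphere,
      MeasurableEquiv.finTwoArrow_apply, EuclideanSpace.dist_eq,
      MeasurableEquiv.toLp, MeasurableEquiv.coe_mk]
    rw [Fin.sum_univ_two]
    have hd : ∀ i : Fin 2, dist (z i) ((0 : EuclideanSpace ℝ (Fin 2)) i) = |z i| := by
      intro i; simp [Real.dist_eq]
    rw [hd 0, hd 1, sq_abs, sq_abs]
    constructor
    · intro h
      change z 0 ^ 2 + z 1 ^ 2 = R ^ 2 at h
      rw [h, Real.sqrt_sq hR]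
    · intro h
      have := Real.sq_sqrt (by positivity : (0:ℝ) ≤ z 0 ^ 2 + z 1 ^ 2)
      rw [h] at this
      exact this.symm
  have hmeas : MeasurableSet {p : ℝ × ℝ | p.1 ^ 2 + p.2 ^ 2 = R ^ 2} := by
    apply measurableSet_eq_fun <;> fun_prop
  have := hmp.measure_preimage hmeas.nullMeasurableSet
  rw [hpre, Measure.addHaar_sphere] at this
  exact this.symm


lemma line_null (a : ℝ) : volume {p : ℝ × ℝ | p.1 = a} = 0 := by
  have : {p : ℝ × ℝ | p.1 = a} = {a} ×ˢ (univ : Set ℝ) := by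
    ext ⟨x, y⟩; simp [Set.mem_prod, eq_comm]
  rw [this]
  rw [show (volume : Measure (ℝ × ℝ)) = (volume : Measure ℝ).prod volume from rfl,
    Measure.prod_prod]
  simp

lemma seg_vol (R h : ℝ) (hR : 0 < R) (hh1 : -R < h) (hh2 : h < R) :
    volume {p : ℝ × ℝ | p.1 ^ 2 + p.2 ^ 2 ≤ R ^ 2 ∧ h ≤ p.1}
      = ENNReal.ofReal (R ^ 2 * Real.arccos (h / R) - h * Real.sqrt (R ^ 2 - h ^ 2)) := by
  set f : ℝ → ℝ := fun x => Real.sqrt (R ^ 2 - x ^ 2) with hf_def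
  have hf : Continuous f := by continuity
  set S := {p : ℝ × ℝ | p.1 ^ 2 + p.2 ^ 2 ≤ R ^ 2 ∧ h ≤ p.1} with hS_def
  set O := regionBetween (-f) f (Ioc h R) with hO_def
  have hOS : O ⊆ S := by
    rintro p ⟨⟨hp1, hp2⟩, hp3, hp4⟩
    have hnn : 0 ≤ R ^ 2 - p.1 ^ 2 := by nlinarith
    have habs : |p.2| < f p.1 := abs_lt.mpr ⟨by simpa [Pi.neg_apply] using hp3, hp4⟩
    have h2 : p.2 ^ 2 < R ^ 2 - p.1 ^ 2 := by
      calc p.2 ^ 2 = |p.2| ^ 2 := (sq_abs _).symm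
        _ < f p.1 ^ 2 := by exact pow_lt_pow_left₀ habs (abs_nonneg _) two_ne_zero
        _ = R ^ 2 - p.1 ^ 2 := Real.sq_sqrt hnn
    exact ⟨by nlinarith, hp1.le⟩
  have hSON : S ⊆ O ∪ ({p : ℝ × ℝ | p.1 = h} ∪ {p : ℝ × ℝ | p.1 ^ 2 + p.2 ^ 2 = R ^ 2}) := by
    rintro p ⟨hp1, hp2⟩
    by_cases he1 : p.1 = h
    · exact Or.inr (Or.inl he1)
    by_cases he2 : p.1 ^ 2 + p.2 ^ 2 = R ^ 2
    · exact Or.inr (Or.inr he2)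
    left
    have hlt : p.1 ^ 2 + p.2 ^ 2 < R ^ 2 := lt_of_le_of_ne hp1 he2
    have h1R : p.1 ≤ R := by nlinarith
    have h2sq : p.2 ^ 2 < R ^ 2 - p.1 ^ 2 := by nlinarith
    have habs : |p.2| < f p.1 := by
      have := Real.sqrt_lt_sqrt (sq_nonneg p.2) h2sq
      rwa [Real.sqrt_sq_eq_abs] at this
    refine ⟨⟨lt_of_le_of_ne hp2 (Ne.symm he1), h1R⟩, ?_, (abs_lt.mp habs).2⟩
    simpa [Pi.neg_apply] using (abs_lt.mp habs).1
  have hnull : volume ({p : ℝ × ℝ | p.1 = h} ∪ {p : ℝ × ℝ | p.1 ^ 2 + p.2 ^ 2 = R ^ 2}) = 0 :=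
    measure_union_null (line_null h) (circle_null R hR.le)
  have hvol : volume S = volume O := by
    apply le_antisymm
    · calc volume S ≤ volume (O ∪ _) := measure_mono hSON
        _ ≤ volume O + _ := measure_union_le _ _
        _ = volume O := by rw [hnull, add_zero]
    · exact measure_mono hOS
  rw [hvol, hO_def]
  have hInt : IntegrableOn f (Ioc h R) := hf.integrableOn_Icc.mono_set Ioc_subset_Icc_self
  rw [show (volume : Measure (ℝ × ℝ)) = (volume : Measure ℝ).prod volume from rfl]
  rw [volume_regionBetween_eq_integral hInt.neg hInt measurableSet_Ioc
    (fun x _ => neg_le_self (Real.sqrt_nonneg _))]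
  congr 1
  rw [← integral_seg R h hR hh1 hh2, intervalIntegral.integral_of_le hh2.le]
  apply setIntegral_congr_fun measurableSet_Ioc
  intro x _
  simp [two_mul, hf_def]

lemma seg_form (R h : ℝ) (hR : 0 < R) (hh1 : -R < h) (hh2 : h < R) :
    R ^ 2 * Real.arccos (h / R) - h * Real.sqrt (R ^ 2 - h ^ 2)
      = R ^ 2 * (Real.arccos (h / R) - Real.sin (2 * Real.arccos (h / R)) / 2) := by
  have hb1 : (-1 : ℝ) ≤ h / R := by rw [le_div_iff₀ hR]; nlinarith
  have hb2 : h / R ≤ 1 := by rw [div_le_one hR]; linarith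
  have hs : Real.sqrt (R ^ 2 - h ^ 2) = R * Real.sqrt (1 - (h / R) ^ 2) := by
    rw [show R ^ 2 - h ^ 2 = (R * Real.sqrt (1 - (h / R) ^ 2)) ^ 2 by
      rw [mul_pow, Real.sq_sqrt (by nlinarith [abs_le.mpr ⟨hb1, hb2⟩, sq_nonneg (h/R), (sq_le_one_iff_abs_le_one (a := h/R)).mpr (abs_le.mpr ⟨hb1, hb2⟩)] : (0:ℝ) ≤ 1 - (h/R)^2)]
      field_simp]
    exact Real.sqrt_sq (by positivity : (0:ℝ) ≤ R * Real.sqrt (1 - (h/R)^2))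
  rw [Real.sin_two_mul, Real.sin_arccos, Real.cos_arccos hb1 hb2, hs]
  field_simp

lemma seg_nonneg (R h : ℝ) (hR : 0 < R) : 0 ≤ R ^ 2 * (Real.arccos (h / R) - Real.sin (2 * Real.arccos (h / R)) / 2) := by
  have h1 : 0 ≤ Real.arccos (h / R) := Real.arccos_nonneg _
  have := Real.sin_le (by linarith : (0:ℝ) ≤ 2 * Real.arccos (h / R))
  nlinarith


lemma lens_split (r rTN x0 a : ℝ) (hx0 : 0 < x0)
    (ha2x : 2 * x0 * a = x0 ^ 2 + rTN ^ 2 - r ^ 2) :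
    {p : ℝ × ℝ | (p.1 - x0) ^ 2 + p.2 ^ 2 ≤ r ^ 2} ∩ {p : ℝ × ℝ | p.1 ^ 2 + p.2 ^ 2 ≤ rTN ^ 2}
      = {p : ℝ × ℝ | p.1 ^ 2 + p.2 ^ 2 ≤ rTN ^ 2 ∧ a ≤ p.1}
        ∪ {p : ℝ × ℝ | (p.1 - x0) ^ 2 + p.2 ^ 2 ≤ r ^ 2 ∧ p.1 ≤ a} := by
  ext p
  simp only [Set.mem_inter_iff, Set.mem_union, Set.mem_setOf_eq]
  constructor
  · rintro ⟨hp1, hp2⟩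
    rcases le_total a p.1 with hle | hle
    · exact Or.inl ⟨hp2, hle⟩
    · exact Or.inr ⟨hp1, hle⟩
  · rintro (⟨hp2, hle⟩ | ⟨hp1, hle⟩)
    · refine ⟨?_, hp2⟩
      nlinarith [mul_le_mul_of_nonneg_left hle (by positivity : (0:ℝ) ≤ 2 * x0)]
    · refine ⟨hp1, ?_⟩
      nlinarith [mul_le_mul_of_nonneg_left hle (by positivity : (0:ℝ) ≤ 2 * x0)]

end LensArea

open LensArea Set

set_option maxHeartbeats 2000000 in
/-- lens area of the intersection of two overlapping discs. -/
theorem area_disc_intersection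
    (r rTN x0 : ℝ) (hr : 0 < r) (hrTN : 0 < rTN) (hx0 : 0 < x0)
    (h1 : |rTN - x0| < r) (h2 : r < rTN + x0)
    (P : EuclideanSpace ℝ (Fin 2)) (hP : ‖P‖ = x0)
    (θ φ : ℝ)
    (hθ : θ = Real.arccos ((r ^ 2 + x0 ^ 2 - rTN ^ 2) / (2 * x0 * r)))
    (hφ : φ = Real.arccos ((-(r ^ 2) + x0 ^ 2 + rTN ^ 2) / (2 * x0 * rTN))) :
    volume (Metric.closedBall P r ∩ Metric.closedBall 0 rTN)
      = ENNReal.ofReal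
          (r ^ 2 * (θ - Real.sin (2 * θ) / 2) + rTN ^ 2 * (φ - Real.sin (2 * φ) / 2)) := by
  obtain ⟨h1a, h1b⟩ := abs_lt.mp h1
  obtain ⟨a, ha_def⟩ : ∃ a : ℝ, a = (x0 ^ 2 + rTN ^ 2 - r ^ 2) / (2 * x0) := ⟨_, rfl⟩
  obtain ⟨b, hb_def⟩ : ∃ b : ℝ, b = (x0 ^ 2 + r ^ 2 - rTN ^ 2) / (2 * x0) := ⟨_, rfl⟩
  have hab : a + b = x0 := by rw [ha_def, hb_def]; field_simp; ring
  have ha2x : 2 * x0 * a = x0 ^ 2 + rTN ^ 2 - r ^ 2 := by rw [ha_def]; field_simp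
  have ha1 : -rTN < a := by
    rw [ha_def, lt_div_iff₀ (by positivity : (0:ℝ) < 2 * x0)]
    nlinarith [mul_pos (sub_pos.mpr h2) (by positivity : (0:ℝ) < rTN + x0 + r)]
  have ha2 : a < rTN := by
    rw [ha_def, div_lt_iff₀ (by positivity : (0:ℝ) < 2 * x0)]
    nlinarith [mul_pos (by linarith : (0:ℝ) < r - (rTN - x0)) (by linarith : (0:ℝ) < r + (rTN - x0))]
  have hb1 : -r < b := by
    rw [hb_def, lt_div_iff₀ (by positivity : (0:ℝ) < 2 * x0)]
    nlinarith [mul_pos (by linarith : (0:ℝ) < x0 + r - rTN) (by linarith : (0:ℝ) < x0 + r + rTN)]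
  have hb2 : b < r := by
    rw [hb_def, div_lt_iff₀ (by positivity : (0:ℝ) < 2 * x0)]
    nlinarith [mul_pos (by linarith : (0:ℝ) < rTN - (x0 - r)) (by linarith : (0:ℝ) < rTN + (x0 - r))]
  have hθ' : θ = Real.arccos (b / r) := by
    rw [hθ, hb_def]; congr 1; field_simp; ring
  have hφ' : φ = Real.arccos (a / rTN) := by
    rw [hφ, ha_def]; congr 1; field_simp; ring
  -- the standard center
  obtain ⟨Q, hQ_def⟩ : ∃ Q : EuclideanSpace ℝ (Fin 2),
      Q = (WithLp.equiv 2 (Fin 2 → ℝ)).symm ![x0, 0] := ⟨_, rfl⟩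
  have hQ0 : Q 0 = x0 := by rw [hQ_def]; rfl
  have hQ1 : Q 1 = 0 := by rw [hQ_def]; rfl
  have hQnorm : ‖Q‖ = x0 := by
    rw [EuclideanSpace.norm_eq, Fin.sum_univ_two, hQ0, hQ1]
    simp [Real.sqrt_sq_eq_abs, abs_of_pos hx0]
  -- reflection mapping P to Q
  obtain ⟨rfl_iso, hrefl_def⟩ : ∃ f : EuclideanSpace ℝ (Fin 2) ≃ₗᵢ[ℝ] EuclideanSpace ℝ (Fin 2),
      f = Submodule.reflection (Submodule.span ℝ {P - Q})ᗮ := ⟨_, rfl⟩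
  have hreflP : rfl_iso P = Q := by rw [hrefl_def]; exact Submodule.reflection_sub (hP.trans hQnorm.symm)
  have hrefl_pre : (⇑rfl_iso) ⁻¹' (Metric.closedBall Q r ∩ Metric.closedBall 0 rTN)
      = Metric.closedBall P r ∩ Metric.closedBall 0 rTN := by
    ext z
    have hdP : dist (rfl_iso z) Q = dist z P := by rw [← hreflP, rfl_iso.dist_map]
    have hd0 : dist (rfl_iso z) 0 = dist z 0 := by
      conv_lhs => rw [← map_zero rfl_iso]
      rw [rfl_iso.dist_map]
    simp only [Set.mem_preimage, Set.mem_inter_iff, Metric.mem_closedBall, hdP, hd0]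
  have hmeas_cb : MeasurableSet
      (Metric.closedBall Q r ∩ Metric.closedBall (0 : EuclideanSpace ℝ (Fin 2)) rTN) :=
    measurableSet_closedBall.inter measurableSet_closedBall
  have step1 : volume (Metric.closedBall P r ∩ Metric.closedBall 0 rTN)
      = volume (Metric.closedBall Q r ∩ Metric.closedBall 0 rTN) := by
    rw [← hrefl_pre]
    exact (rfl_iso.measurePreserving).measure_preimage hmeas_cb.nullMeasurableSet
  -- transfer to ℝ × ℝ
  have hψmp : MeasurePreserving (fun z : EuclideanSpace ℝ (Fin 2) =>
      ((MeasurableEquiv.finTwoArrow) ((MeasurableEquiv.toLp 2 (Fin 2 → ℝ)).symm z) : ℝ × ℝ))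
      volume volume :=
    (volume_preserving_finTwoArrow ℝ).comp
      (EuclideanSpace.volume_preserving_symm_measurableEquiv_toLp (Fin 2))
  have hsqrt_le : ∀ (s c : ℝ), 0 ≤ s → 0 < c → (Real.sqrt s ≤ c ↔ s ≤ c ^ 2) := by
    intro s c hs hc
    constructor
    · intro h
      calc s = Real.sqrt s ^ 2 := (Real.sq_sqrt hs).symm
        _ ≤ c ^ 2 := by nlinarith [Real.sqrt_nonneg s]
    · intro h
      calc Real.sqrt s ≤ Real.sqrt (c ^ 2) := Real.sqrt_le_sqrt h
        _ = c := Real.sqrt_sq hc.le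
  have hψ_pre : (fun z : EuclideanSpace ℝ (Fin 2) =>
      ((MeasurableEquiv.finTwoArrow) ((MeasurableEquiv.toLp 2 (Fin 2 → ℝ)).symm z) : ℝ × ℝ)) ⁻¹'
        ({p : ℝ × ℝ | (p.1 - x0) ^ 2 + p.2 ^ 2 ≤ r ^ 2}
          ∩ {p : ℝ × ℝ | p.1 ^ 2 + p.2 ^ 2 ≤ rTN ^ 2})
      = Metric.closedBall Q r ∩ Metric.closedBall 0 rTN := by
    ext z
    simp only [Set.mem_preimage, Set.mem_inter_iff, Metric.mem_closedBall, Set.mem_setOf_eq,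
      MeasurableEquiv.finTwoArrow_apply, EuclideanSpace.dist_eq, Fin.sum_univ_two]
    have hd : ∀ (u v : ℝ), dist u v ^ 2 = (u - v) ^ 2 := by
      intro u v; rw [Real.dist_eq, sq_abs]
    have hh0 : ((0 : EuclideanSpace ℝ (Fin 2)) 0 : ℝ) = 0 := rfl
    have hh1 : ((0 : EuclideanSpace ℝ (Fin 2)) 1 : ℝ) = 0 := rfl
    rw [hd, hd, hd, hd, hQ0, hQ1, hh0, hh1]
    simp only [sub_zero]
    rw [hsqrt_le _ _ (by positivity) hr, hsqrt_le _ _ (by positivity) hrTN]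
    rfl
  have hmB1 : MeasurableSet {p : ℝ × ℝ | (p.1 - x0) ^ 2 + p.2 ^ 2 ≤ r ^ 2} :=
    measurableSet_le (by fun_prop) (by fun_prop)
  have hmB2 : MeasurableSet {p : ℝ × ℝ | p.1 ^ 2 + p.2 ^ 2 ≤ rTN ^ 2} :=
    measurableSet_le (by fun_prop) (by fun_prop)
  have step2 : volume (Metric.closedBall Q r ∩ Metric.closedBall (0:EuclideanSpace ℝ (Fin 2)) rTN)
      = volume ({p : ℝ × ℝ | (p.1 - x0) ^ 2 + p.2 ^ 2 ≤ r ^ 2}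
          ∩ {p : ℝ × ℝ | p.1 ^ 2 + p.2 ^ 2 ≤ rTN ^ 2}) := by
    rw [← hψ_pre]
    exact hψmp.measure_preimage (hmB1.inter hmB2).nullMeasurableSet
  -- split the lens into two segments
  have hsplit := lens_split r rTN x0 a hx0 ha2x
  have hmSeg2 : MeasurableSet {p : ℝ × ℝ | (p.1 - x0) ^ 2 + p.2 ^ 2 ≤ r ^ 2 ∧ p.1 ≤ a} := by
    have : {p : ℝ × ℝ | (p.1 - x0) ^ 2 + p.2 ^ 2 ≤ r ^ 2 ∧ p.1 ≤ a}
        = {p : ℝ × ℝ | (p.1 - x0) ^ 2 + p.2 ^ 2 ≤ r ^ 2} ∩ {p : ℝ × ℝ | p.1 ≤ a} := rfl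
    rw [this]
    exact hmB1.inter (measurableSet_le (by fun_prop) (by fun_prop))
  have hdisj : volume ({p : ℝ × ℝ | p.1 ^ 2 + p.2 ^ 2 ≤ rTN ^ 2 ∧ a ≤ p.1}
      ∩ {p : ℝ × ℝ | (p.1 - x0) ^ 2 + p.2 ^ 2 ≤ r ^ 2 ∧ p.1 ≤ a}) = 0 := by
    refine measure_mono_null ?_ (line_null a)
    rintro p ⟨⟨_, hp1⟩, _, hp2⟩
    exact le_antisymm hp2 hp1
  have step3 : volume ({p : ℝ × ℝ | (p.1 - x0) ^ 2 + p.2 ^ 2 ≤ r ^ 2}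
        ∩ {p : ℝ × ℝ | p.1 ^ 2 + p.2 ^ 2 ≤ rTN ^ 2})
      = volume {p : ℝ × ℝ | p.1 ^ 2 + p.2 ^ 2 ≤ rTN ^ 2 ∧ a ≤ p.1}
        + volume {p : ℝ × ℝ | (p.1 - x0) ^ 2 + p.2 ^ 2 ≤ r ^ 2 ∧ p.1 ≤ a} := by
    rw [hsplit, ← measure_union_add_inter _ hmSeg2, hdisj, add_zero]
  -- segment 1 (the φ-segment)
  have hvol1 : volume {p : ℝ × ℝ | p.1 ^ 2 + p.2 ^ 2 ≤ rTN ^ 2 ∧ a ≤ p.1}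
      = ENNReal.ofReal (rTN ^ 2 * (φ - Real.sin (2 * φ) / 2)) := by
    rw [seg_vol rTN a hrTN ha1 ha2, seg_form rTN a hrTN ha1 ha2, hφ']
  -- segment 2 (the θ-segment), via the flip p ↦ (x0 - p.1, p.2)
  have hvol2 : volume {p : ℝ × ℝ | (p.1 - x0) ^ 2 + p.2 ^ 2 ≤ r ^ 2 ∧ p.1 ≤ a}
      = ENNReal.ofReal (r ^ 2 * (θ - Real.sin (2 * θ) / 2)) := by
    have hTmp : MeasurePreserving (fun p : ℝ × ℝ => (x0 - p.1, p.2)) volume volume :=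
      (Measure.measurePreserving_sub_left volume x0).prod (MeasurePreserving.id _)
    have hTpre : (fun p : ℝ × ℝ => (x0 - p.1, p.2)) ⁻¹'
        {p : ℝ × ℝ | p.1 ^ 2 + p.2 ^ 2 ≤ r ^ 2 ∧ b ≤ p.1}
        = {p : ℝ × ℝ | (p.1 - x0) ^ 2 + p.2 ^ 2 ≤ r ^ 2 ∧ p.1 ≤ a} := by
      ext p
      simp only [Set.mem_preimage, Set.mem_setOf_eq]
      constructor
      · rintro ⟨hp1, hp2⟩
        exact ⟨by nlinarith, by linarith⟩
      · rintro ⟨hp1, hp2⟩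
        exact ⟨by nlinarith, by linarith⟩
    have hmS : MeasurableSet {p : ℝ × ℝ | p.1 ^ 2 + p.2 ^ 2 ≤ r ^ 2 ∧ b ≤ p.1} := by
      have : {p : ℝ × ℝ | p.1 ^ 2 + p.2 ^ 2 ≤ r ^ 2 ∧ b ≤ p.1}
          = {p : ℝ × ℝ | p.1 ^ 2 + p.2 ^ 2 ≤ r ^ 2} ∩ {p : ℝ × ℝ | b ≤ p.1} := rfl
      rw [this]
      exact (measurableSet_le (by fun_prop) (by fun_prop)).inter
        (measurableSet_le (by fun_prop) (by fun_prop))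
    rw [← hTpre, hTmp.measure_preimage hmS.nullMeasurableSet,
      seg_vol r b hr hb1 hb2, seg_form r b hr hb1 hb2, hθ']
  rw [step1, step2, step3, hvol1, hvol2, ← ENNReal.ofReal_add (by
      rw [hφ']; exact seg_nonneg rTN a hrTN) (by rw [hθ']; exact seg_nonneg r b hr), add_comm]
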